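/- Let F : D → ℝ be a warping function such that w = (F⁻¹)′ is continuous and satisfies w(x+y) ≤ C·w(x)·w(y) for all x,y ∈ ℝ, let v be a symmetric submultiplicative weight, let n ∈ ℕ₀ and r > 0, and set w₁(s) := v(s)·w(−s)ⁿ·√(w(s))·(1+|s|)^{1+r} and w₂(s) := v(s)·√(w(−s))·(1+|s|)^{1+r}. If θ ∈ C^{n+1}(ℝ) satisfies θ^{(k)} ∈ L²_{w₁}(ℝ) ∩ L²_{w₂}(ℝ) for all 0 ≤ k ≤ n+1, then ∫_ℝ √(w(z))·v(z)·c_n(z) dz < ∞, where c_n(z) := max_{1≤k≤n+1} ∫_ℝ w(−s)ⁿ · |(θ·conj(θ(·−z)))^{(k)}(s)| ds. -/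

import Mathlib

open MeasureTheory Filter Topology Set
open scoped ENNReal NNReal

noncomputable section

/-- A warping function `F : D → ℝ` (with `D = ℝ` or `D = (0,∞)`), bundled together with its
inverse `Finv`, its derivative `F'` and the associated weight `w = (F⁻¹)'`.  The fields record:
bijectivity of `F : D → ℝ`, `F ∈ C¹(D)` with `F' > 0`, strict decrease of `F'` in `|t|`,
`w = (F⁻¹)'`, oddness of `F` when `D = ℝ`, and `v`-moderateness of `w` for some
submultiplicative weight `v`. -/
structure Warping where
  D : Set ℝ
  F : ℝ → ℝ
  Finv : ℝ → ℝ
  F' : ℝ → ℝ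
  w : ℝ → ℝ
  hD : D = Set.univ ∨ D = Set.Ioi 0
  left_inv : ∀ x ∈ D, Finv (F x) = x
  mem_inv : ∀ s : ℝ, Finv s ∈ D
  right_inv : ∀ s : ℝ, F (Finv s) = s
  F_hasDeriv : ∀ t ∈ D, HasDerivAt F (F' t) t
  F'_cont : ContinuousOn F' D
  F'_pos : ∀ t ∈ D, 0 < F' t
  F'_dec : ∀ t₀ ∈ D, ∀ t₁ ∈ D, |t₀| < |t₁| → F' t₁ < F' t₀
  w_hasDeriv : ∀ s : ℝ, HasDerivAt Finv (w s) s
  w_pos : ∀ s : ℝ, 0 < w s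
  odd_of_univ : D = Set.univ → ∀ t, F (-t) = -F t
  moderate : ∃ (v : ℝ → ℝ) (C₀ : ℝ), (∀ x, 0 < v x) ∧ (∀ x y, v (x + y) ≤ v x * v y) ∧
      ∀ x y, w (x + y) ≤ C₀ * v x * w y

/-- The frequency-side warped atom `g_x = √(F'(x)) · (T_{F(x)}θ) ∘ F` on `D`, extended by zero. -/
def gxFun (W : Warping) (θ : ℝ → ℂ) (x : ℝ) : ℝ → ℂ :=
  W.D.indicator fun t => (Real.sqrt (W.F' x) : ℂ) * θ (W.F t - W.F x)

/-- The Fourier transform of the warped time-frequency atom `g_{x,ξ} = T_ξ (ǧ_x)`: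
`ĝ_{x,ξ}(t) = e^{-2πiξt} g_x(t)`. -/
def hatAtom (W : Warping) (θ : ℝ → ℂ) (x ξ : ℝ) : ℝ → ℂ := fun t =>
  gxFun W θ x t * Complex.exp (-(2 * Real.pi * Complex.I * ξ * t))

/-- The warped time-frequency transform `V_{θ,F} f (x,ξ) = ⟨f, g_{x,ξ}⟩`, expressed on the
Fourier side (via Plancherel) in terms of `fh = f̂`:
`V_{θ,F} f (x,ξ) = ∫ f̂(t) conj(g_x(t)) e^{2πiξt} dt`. -/
def warpedTransform (W : Warping) (θ fh : ℝ → ℂ) (x ξ : ℝ) : ℂ :=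
  ∫ t : ℝ, fh t * (starRingEnd ℂ) (gxFun W θ x t) * Complex.exp (2 * Real.pi * Complex.I * ξ * t)

/-! ### Auxiliary lemmas for Statement 9 -/

/-- Superadditivity of the lower Lebesgue integral over finite sums
(no measurability required). -/
lemma aux_sum_le_lintegral {ι : Type*} {α : Type*} [MeasurableSpace α] {μ : Measure α}
    (t : Finset ι) (f : ι → α → ℝ≥0∞) :
    ∑ i ∈ t, ∫⁻ a, f i a ∂μ ≤ ∫⁻ a, ∑ i ∈ t, f i a ∂μ := by
  induction t using Finset.cons_induction with
  | empty => simp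
  | cons i t hi ih =>
    simp only [Finset.sum_cons]
    exact le_trans (add_le_add le_rfl ih) (le_lintegral_add _ _)

/-- A weighted `L²` function against a polynomially decaying weight is `L¹`. -/
lemma aux_int {r : ℝ} (hr : 0 < r) (c : ℝ → ℝ) (hc : ∀ s, 0 ≤ c s) (g : ℝ → ℂ)
    (h : MemLp (fun s : ℝ => (c s * (1 + |s|) ^ (1 + r)) • g s) 2 volume) :
    (∫⁻ s : ℝ, ENNReal.ofReal (c s * ‖g s‖)) < ⊤ ∧
      AEMeasurable (fun s => ENNReal.ofReal (c s * ‖g s‖)) volume := by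
  set q1 : ℝ → ℝ := fun s => (1 + |s|) ^ (-(1 + r)) with hq1
  have habs : ∀ s : ℝ, (0:ℝ) < 1 + |s| := fun s => by positivity
  have hq1c : Continuous q1 :=
    (continuous_const.add continuous_abs).rpow_const fun x => Or.inl (habs x).ne'
  have hpq : ∀ s, (1 + |s|) ^ (1 + r) * q1 s = 1 := by
    intro s
    rw [hq1, ← Real.rpow_add (habs s), add_neg_cancel, Real.rpow_zero]
  have heq : ∀ s, c s * ‖g s‖ = ‖((c s * (1 + |s|) ^ (1 + r)) • g s : ℂ)‖ * q1 s := by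
    intro s
    rw [norm_smul, Real.norm_eq_abs,
      abs_of_nonneg (mul_nonneg (hc s) (Real.rpow_nonneg (by positivity) _))]
    linear_combination (-(c s * ‖g s‖)) * hpq s
  have hm : AEMeasurable (fun s => ENNReal.ofReal (c s * ‖g s‖)) volume := by
    have h1 : AEMeasurable (fun s => ‖((c s * (1 + |s|) ^ (1 + r)) • g s : ℂ)‖ * q1 s) volume :=
      h.aestronglyMeasurable.norm.aemeasurable.mul hq1c.measurable.aemeasurable
    have := ENNReal.measurable_ofReal.comp_aemeasurable h1
    simpa only [← heq, Function.comp_def] using this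
  refine ⟨?_, hm⟩
  have hq2 : MemLp q1 2 volume := by
    rw [memLp_two_iff_integrable_sq hq1c.aestronglyMeasurable]
    have e2 : (fun s : ℝ => q1 s ^ 2) = fun s : ℝ => (1 + ‖s‖) ^ (-(2 * (1 + r))) := by
      funext s
      rw [hq1, Real.norm_eq_abs, ← Real.rpow_natCast (((1:ℝ) + |s|) ^ (-(1 + r))) 2,
        ← Real.rpow_mul (habs s).le]
      norm_num; ring_nf
    rw [e2]
    apply integrable_one_add_norm (E := ℝ); simp; linarith
  have hInt : Integrable
      (fun s : ℝ => q1 s • ‖((c s * (1 + |s|) ^ (1 + r)) • g s : ℂ)‖) volume := by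
    rw [← memLp_one_iff_integrable]
    exact MemLp.smul (h.norm) hq2
  refine lt_of_le_of_lt ?_ hInt.2
  apply lintegral_mono
  intro s
  dsimp only
  rw [heq s]
  calc ENNReal.ofReal (‖((c s * (1 + |s|) ^ (1 + r)) • g s : ℂ)‖ * q1 s)
      = ENNReal.ofReal (q1 s • ‖((c s * (1 + |s|) ^ (1 + r)) • g s : ℂ)‖) := by
        rw [smul_eq_mul, mul_comm]
    _ ≤ ‖(q1 s • ‖((c s * (1 + |s|) ^ (1 + r)) • g s : ℂ)‖ : ℝ)‖₊ := Real.ofReal_le_enorm _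

/-- Leibniz-type bound on iterated derivatives of `θ · conj (θ (· − z))`. -/
lemma aux_leibniz (n : ℕ) (θ : ℝ → ℂ) (z : ℝ) (hθ : ContDiff ℝ (n + 1) θ)
    (k : ℕ) (hk : k ≤ n + 1) (s : ℝ) :
    ‖iteratedDeriv k (fun u : ℝ => θ u * (starRingEnd ℂ) (θ (u - z))) s‖ ≤
      ∑ j ∈ Finset.range (k + 1), (k.choose j : ℝ) * ‖iteratedDeriv j θ s‖ *
        ‖iteratedDeriv (k - j) θ (s - z)‖ := by
  have hψ : ContDiff ℝ (n + 1) (fun u : ℝ => (starRingEnd ℂ) (θ (u - z))) :=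
    Complex.conjCLE.contDiff.comp (hθ.comp (contDiff_id.sub contDiff_const))
  have hk' : (k : WithTop ℕ∞) ≤ (n : WithTop ℕ∞) + 1 := by exact_mod_cast hk
  rw [← norm_iteratedFDeriv_eq_norm_iteratedDeriv]
  refine (norm_iteratedFDeriv_mul_le hθ hψ s hk').trans_eq ?_
  refine Finset.sum_congr rfl fun j hj => ?_
  rw [norm_iteratedFDeriv_eq_norm_iteratedDeriv]
  congr 1
  have e1 : (fun u : ℝ => (starRingEnd ℂ) (θ (u - z))) =
      ⇑Complex.conjLIE ∘ (fun u : ℝ => θ (u + -z)) := by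
    funext u; simp [sub_eq_add_neg]
  rw [e1, Complex.conjLIE.norm_iteratedFDeriv_comp_left _ s _,
    norm_iteratedFDeriv_eq_norm_iteratedDeriv, iteratedDeriv_comp_add_const]
  simp [sub_eq_add_neg]

/-- The key pointwise weight estimate. -/
lemma aux_key (w : ℝ → ℝ) (hw : ∀ x, 0 < w x) (C : ℝ) (hC : 0 < C)
    (hwsub : ∀ x y : ℝ, w (x + y) ≤ C * w x * w y)
    (v : ℝ → ℝ) (hvpos : ∀ x, 0 < v x) (hvsym : ∀ x, v (-x) = v x)
    (hvsub : ∀ x y, v (x + y) ≤ v x * v y)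
    (n : ℕ) (θ : ℝ → ℂ) (hθ : ContDiff ℝ (n + 1) θ) (k : ℕ) (hk : k ≤ n + 1) (z s : ℝ) :
    Real.sqrt (w z) * v z * (w (-s) ^ n *
        ‖iteratedDeriv k (fun u : ℝ => θ u * (starRingEnd ℂ) (θ (u - z))) s‖)
      ≤ Real.sqrt C * ∑ j ∈ Finset.range (k + 1), (k.choose j : ℝ) *
          (((v s * w (-s) ^ n * Real.sqrt (w s)) * ‖iteratedDeriv j θ s‖) *
           ((v (s - z) * Real.sqrt (w (-(s - z)))) * ‖iteratedDeriv (k - j) θ (s - z)‖)) := by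
  have hleib := aux_leibniz n θ z hθ k hk s
  have hwnN : (0:ℝ) ≤ w (-s) ^ n := pow_nonneg (hw (-s)).le n
  have hsq : Real.sqrt (w z) ≤ Real.sqrt C * Real.sqrt (w s) * Real.sqrt (w (-(s - z))) := by
    have h3 := hwsub s (z - s)
    rw [show s + (z - s) = z by ring] at h3
    have h2 : w z ≤ C * w s * w (-(s - z)) := by rw [show -(s - z) = z - s by ring]; exact h3
    calc Real.sqrt (w z) ≤ Real.sqrt (C * w s * w (-(s - z))) := Real.sqrt_le_sqrt h2
      _ = Real.sqrt C * Real.sqrt (w s) * Real.sqrt (w (-(s - z))) := by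
          rw [Real.sqrt_mul (mul_nonneg hC.le (hw s).le), Real.sqrt_mul hC.le]
  have hv : v z ≤ v s * v (s - z) := by
    have h4 := hvsub s (z - s)
    rw [show s + (z - s) = z by ring] at h4
    have h5 : v (z - s) = v (s - z) := by rw [← hvsym (s - z), neg_sub]
    rwa [h5] at h4
  have hm1 : Real.sqrt (w z) * v z ≤
      (Real.sqrt C * Real.sqrt (w s) * Real.sqrt (w (-(s - z)))) * (v s * v (s - z)) :=
    mul_le_mul hsq hv (hvpos z).le (by positivity)
  calc Real.sqrt (w z) * v z * (w (-s) ^ n *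
        ‖iteratedDeriv k (fun u : ℝ => θ u * (starRingEnd ℂ) (θ (u - z))) s‖)
      ≤ Real.sqrt (w z) * v z * (w (-s) ^ n *
          ∑ j ∈ Finset.range (k + 1), (k.choose j : ℝ) * ‖iteratedDeriv j θ s‖ *
            ‖iteratedDeriv (k - j) θ (s - z)‖) := by
        refine mul_le_mul_of_nonneg_left (mul_le_mul_of_nonneg_left hleib hwnN) ?_
        exact mul_nonneg (Real.sqrt_nonneg _) (hvpos z).le
    _ = ∑ j ∈ Finset.range (k + 1), (Real.sqrt (w z) * v z) * (w (-s) ^ n *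
          ((k.choose j : ℝ) * ‖iteratedDeriv j θ s‖ * ‖iteratedDeriv (k - j) θ (s - z)‖)) := by
        rw [Finset.mul_sum, Finset.mul_sum]
    _ ≤ ∑ j ∈ Finset.range (k + 1), Real.sqrt C * ((k.choose j : ℝ) *
          (((v s * w (-s) ^ n * Real.sqrt (w s)) * ‖iteratedDeriv j θ s‖) *
           ((v (s - z) * Real.sqrt (w (-(s - z)))) * ‖iteratedDeriv (k - j) θ (s - z)‖))) := by
        refine Finset.sum_le_sum fun j hj => ?_
        have h6 : (0:ℝ) ≤ w (-s) ^ n *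
            ((k.choose j : ℝ) * ‖iteratedDeriv j θ s‖ * ‖iteratedDeriv (k - j) θ (s - z)‖) := by
          positivity
        calc (Real.sqrt (w z) * v z) * (w (-s) ^ n *
              ((k.choose j : ℝ) * ‖iteratedDeriv j θ s‖ * ‖iteratedDeriv (k - j) θ (s - z)‖))
            ≤ ((Real.sqrt C * Real.sqrt (w s) * Real.sqrt (w (-(s - z)))) * (v s * v (s - z))) *
              (w (-s) ^ n * ((k.choose j : ℝ) * ‖iteratedDeriv j θ s‖ *
                ‖iteratedDeriv (k - j) θ (s - z)‖)) := mul_le_mul_of_nonneg_right hm1 h6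
          _ = Real.sqrt C * ((k.choose j : ℝ) *
              (((v s * w (-s) ^ n * Real.sqrt (w s)) * ‖iteratedDeriv j θ s‖) *
               ((v (s - z) * Real.sqrt (w (-(s - z)))) *
                ‖iteratedDeriv (k - j) θ (s - z)‖))) := by ring
    _ = Real.sqrt C * ∑ j ∈ Finset.range (k + 1), (k.choose j : ℝ) *
          (((v s * w (-s) ^ n * Real.sqrt (w s)) * ‖iteratedDeriv j θ s‖) *
           ((v (s - z) * Real.sqrt (w (-(s - z)))) * ‖iteratedDeriv (k - j) θ (s - z)‖)) := by
        rw [Finset.mul_sum]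

/-- Double-integral finiteness via Tonelli and translation invariance. -/
lemma aux_double {ι : Type*} (t : Finset ι) (g1 g2 : ι → ℝ → ℝ≥0∞) (e : ι → ℝ≥0∞)
    (h1 : ∀ i ∈ t, AEMeasurable (g1 i) volume) (h2 : ∀ i ∈ t, AEMeasurable (g2 i) volume)
    (hfin1 : ∀ i ∈ t, (∫⁻ s, g1 i s) < ⊤) (hfin2 : ∀ i ∈ t, (∫⁻ s, g2 i s) < ⊤)
    (he : ∀ i ∈ t, e i < ⊤) :
    (∫⁻ z : ℝ, ∫⁻ s : ℝ, ∑ i ∈ t, e i * (g1 i s * g2 i (s - z))) < ⊤ := by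
  have hQMP : Measure.QuasiMeasurePreserving (fun p : ℝ × ℝ => p.2 - p.1)
      ((volume : Measure ℝ).prod volume) volume :=
    (MeasureTheory.quasiMeasurePreserving_sub volume volume).comp
      (Measure.measurePreserving_swap).quasiMeasurePreserving
  have hQMPz : ∀ s : ℝ, Measure.QuasiMeasurePreserving (fun z : ℝ => s - z) volume volume :=
    fun s => (Measure.measurePreserving_sub_left volume s).quasiMeasurePreserving
  have hswap : (∫⁻ z : ℝ, ∫⁻ s : ℝ, ∑ i ∈ t, e i * (g1 i s * g2 i (s - z)))
      = ∫⁻ s : ℝ, ∫⁻ z : ℝ, ∑ i ∈ t, e i * (g1 i s * g2 i (s - z)) := by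
    refine lintegral_lintegral_swap ?_
    apply Finset.aemeasurable_fun_sum
    intro i hi
    exact (((h1 i hi).comp_quasiMeasurePreserving Measure.quasiMeasurePreserving_snd).mul
      ((h2 i hi).comp_quasiMeasurePreserving hQMP)).const_mul _
  rw [hswap]
  have hinner : ∀ s : ℝ, (∫⁻ z : ℝ, ∑ i ∈ t, e i * (g1 i s * g2 i (s - z)))
      = ∑ i ∈ t, (e i * (∫⁻ u, g2 i u)) * g1 i s := by
    intro s
    have hre : ∀ z : ℝ, (∑ i ∈ t, e i * (g1 i s * g2 i (s - z)))
        = ∑ i ∈ t, (e i * g1 i s) * g2 i (s - z) :=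
      fun z => Finset.sum_congr rfl fun i _ => by ring
    simp only [hre]
    rw [lintegral_finset_sum' (f := fun (i : ι) (z : ℝ) => (e i * g1 i s) * g2 i (s - z)) t
      (fun i hi => ((h2 i hi).comp_quasiMeasurePreserving (hQMPz s)).const_mul _)]
    refine Finset.sum_congr rfl fun i hi => ?_
    rw [lintegral_const_mul'' (e i * g1 i s) (f := fun z : ℝ => g2 i (s - z))
        ((h2 i hi).comp_quasiMeasurePreserving (hQMPz s)),
      (Measure.measurePreserving_sub_left volume s).lintegral_comp_emb
        (MeasurableEquiv.subLeft s).measurableEmbedding (g2 i)]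
    ring
  simp only [hinner]
  rw [lintegral_finset_sum' t (fun i hi => (h1 i hi).const_mul _)]
  refine ENNReal.sum_lt_top.mpr fun i hi => ?_
  rw [lintegral_const_mul'' _ (h1 i hi)]
  exact ENNReal.mul_lt_top (ENNReal.mul_lt_top (he i hi) (hfin2 i hi)) (hfin1 i hi)

/-- Let `F : D → ℝ` be a warping function such that `w = (F⁻¹)'` is
continuous and satisfies `w(x+y) ≤ C w(x) w(y)`, let `v` be a symmetric submultiplicative
weight, `n ∈ ℕ₀`, `r > 0`, and set `w₁(s) = v(s) w(−s)ⁿ √(w(s)) (1+|s|)^{1+r}`,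
`w₂(s) = v(s) √(w(−s)) (1+|s|)^{1+r}`.  If `θ ∈ C^{n+1}(ℝ)` satisfies
`θ^{(k)} ∈ L²_{w₁}(ℝ) ∩ L²_{w₂}(ℝ)` for all `0 ≤ k ≤ n+1`, then
`∫ √(w(z)) v(z) c_n(z) dz < ∞`, where
`c_n(z) = max_{1≤k≤n+1} ∫ w(−s)ⁿ |(θ · conj θ(·−z))^{(k)}(s)| ds`. -/
theorem integrable_oscillation_bound
    (W : Warping) (hwc : Continuous W.w)
    (C : ℝ) (hwsub : ∀ x y : ℝ, W.w (x + y) ≤ C * W.w x * W.w y)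
    (v : ℝ → ℝ) (hvpos : ∀ x, 0 < v x) (hvsym : ∀ x, v (-x) = v x)
    (hvsub : ∀ x y, v (x + y) ≤ v x * v y)
    (n : ℕ) (r : ℝ) (hr : 0 < r)
    (θ : ℝ → ℂ) (hθ : ContDiff ℝ (n + 1) θ)
    (hθ₁ : ∀ k ≤ n + 1, MemLp
      (fun s : ℝ => (v s * W.w (-s) ^ n * Real.sqrt (W.w s) * (1 + |s|) ^ (1 + r)) •
        iteratedDeriv k θ s) 2 volume)
    (hθ₂ : ∀ k ≤ n + 1, MemLp
      (fun s : ℝ => (v s * Real.sqrt (W.w (-s)) * (1 + |s|) ^ (1 + r)) •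
        iteratedDeriv k θ s) 2 volume) :
    (∫⁻ z : ℝ, ENNReal.ofReal (Real.sqrt (W.w z) * v z) *
        (Finset.Icc 1 (n + 1)).sup (fun k =>
          ∫⁻ s : ℝ, ENNReal.ofReal (W.w (-s) ^ n *
            ‖iteratedDeriv k (fun u : ℝ => θ u * (starRingEnd ℂ) (θ (u - z))) s‖))) < ⊤ := by
  classical
  have hC : 0 < C := by
    have h := hwsub 0 0
    rw [add_zero] at h
    nlinarith [W.w_pos 0, mul_pos (W.w_pos 0) (W.w_pos 0)]
  -- the two families of L¹ weights
  have hA : ∀ j, j ≤ n + 1 →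
      (∫⁻ s : ℝ, ENNReal.ofReal ((v s * W.w (-s) ^ n * Real.sqrt (W.w s)) *
        ‖iteratedDeriv j θ s‖)) < ⊤ ∧
      AEMeasurable (fun s => ENNReal.ofReal ((v s * W.w (-s) ^ n * Real.sqrt (W.w s)) *
        ‖iteratedDeriv j θ s‖)) volume := by
    intro j hj
    refine aux_int hr (fun s => v s * W.w (-s) ^ n * Real.sqrt (W.w s))
      (fun s => mul_nonneg (mul_nonneg (hvpos s).le (pow_nonneg (W.w_pos (-s)).le n))
        (Real.sqrt_nonneg _)) _ ?_
    exact hθ₁ j hj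
  have hB : ∀ j, j ≤ n + 1 →
      (∫⁻ s : ℝ, ENNReal.ofReal ((v s * Real.sqrt (W.w (-s))) *
        ‖iteratedDeriv j θ s‖)) < ⊤ ∧
      AEMeasurable (fun s => ENNReal.ofReal ((v s * Real.sqrt (W.w (-s))) *
        ‖iteratedDeriv j θ s‖)) volume := by
    intro j hj
    refine aux_int hr (fun s => v s * Real.sqrt (W.w (-s)))
      (fun s => mul_nonneg (hvpos s).le (Real.sqrt_nonneg _)) _ ?_
    exact hθ₂ j hj
  -- sigma-type index set
  set T : Finset ((_ : ℕ) × ℕ) := (Finset.Icc 1 (n + 1)).sigma (fun k => Finset.range (k + 1))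
    with hT
  have hmemT : ∀ i ∈ T, i.2 ≤ n + 1 ∧ i.1 - i.2 ≤ n + 1 := by
    intro i hi
    rw [hT, Finset.mem_sigma] at hi
    obtain ⟨h1, h2⟩ := hi
    rw [Finset.mem_Icc] at h1
    rw [Finset.mem_range, Nat.lt_succ_iff] at h2
    exact ⟨le_trans h2 h1.2, le_trans (Nat.sub_le _ _) h1.2⟩
  -- step 1: pointwise bound on the integrand
  have step1 : ∀ z : ℝ,
      ENNReal.ofReal (Real.sqrt (W.w z) * v z) *
        (Finset.Icc 1 (n + 1)).sup (fun k =>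
          ∫⁻ s : ℝ, ENNReal.ofReal (W.w (-s) ^ n *
            ‖iteratedDeriv k (fun u : ℝ => θ u * (starRingEnd ℂ) (θ (u - z))) s‖))
      ≤ ∫⁻ s : ℝ, ∑ i ∈ T,
          (ENNReal.ofReal (Real.sqrt C) * (i.1.choose i.2 : ℝ≥0∞)) *
          (ENNReal.ofReal ((v s * W.w (-s) ^ n * Real.sqrt (W.w s)) *
              ‖iteratedDeriv i.2 θ s‖) *
           ENNReal.ofReal ((v (s - z) * Real.sqrt (W.w (-(s - z)))) *
              ‖iteratedDeriv (i.1 - i.2) θ (s - z)‖)) := by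
    intro z
    have hptwise : ∀ k ∈ Finset.Icc 1 (n + 1), ∀ s : ℝ,
        ENNReal.ofReal (Real.sqrt (W.w z) * v z) *
          ENNReal.ofReal (W.w (-s) ^ n *
            ‖iteratedDeriv k (fun u : ℝ => θ u * (starRingEnd ℂ) (θ (u - z))) s‖)
        ≤ ∑ j ∈ Finset.range (k + 1),
            (ENNReal.ofReal (Real.sqrt C) * (k.choose j : ℝ≥0∞)) *
            (ENNReal.ofReal ((v s * W.w (-s) ^ n * Real.sqrt (W.w s)) *
                ‖iteratedDeriv j θ s‖) *
             ENNReal.ofReal ((v (s - z) * Real.sqrt (W.w (-(s - z)))) *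
                ‖iteratedDeriv (k - j) θ (s - z)‖)) := by
      intro k hk s
      rw [← ENNReal.ofReal_mul (mul_nonneg (Real.sqrt_nonneg _) (hvpos z).le)]
      refine le_trans (ENNReal.ofReal_le_ofReal
        (aux_key W.w W.w_pos C hC hwsub v hvpos hvsym hvsub n θ hθ k
          (Finset.mem_Icc.mp hk).2 z s)) (le_of_eq ?_)
      have haNN : ∀ (j : ℕ) (x : ℝ),
          (0:ℝ) ≤ (v x * W.w (-x) ^ n * Real.sqrt (W.w x)) * ‖iteratedDeriv j θ x‖ :=
        fun j x => mul_nonneg (mul_nonneg (mul_nonneg (hvpos x).le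
          (pow_nonneg (W.w_pos (-x)).le n)) (Real.sqrt_nonneg _)) (norm_nonneg _)
      have hbNN : ∀ (j : ℕ) (x : ℝ),
          (0:ℝ) ≤ (v x * Real.sqrt (W.w (-x))) * ‖iteratedDeriv j θ x‖ :=
        fun j x => mul_nonneg (mul_nonneg (hvpos x).le (Real.sqrt_nonneg _)) (norm_nonneg _)
      rw [ENNReal.ofReal_mul (Real.sqrt_nonneg _),
        ENNReal.ofReal_sum_of_nonneg (fun j hj =>
          mul_nonneg (Nat.cast_nonneg _) (mul_nonneg (haNN j s) (hbNN (k - j) (s - z)))),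
        Finset.mul_sum]
      refine Finset.sum_congr rfl fun j hj => ?_
      rw [ENNReal.ofReal_mul (Nat.cast_nonneg _), ENNReal.ofReal_mul (haNN j s),
        ENNReal.ofReal_natCast]
      ring
    calc ENNReal.ofReal (Real.sqrt (W.w z) * v z) *
          (Finset.Icc 1 (n + 1)).sup (fun k =>
            ∫⁻ s : ℝ, ENNReal.ofReal (W.w (-s) ^ n *
              ‖iteratedDeriv k (fun u : ℝ => θ u * (starRingEnd ℂ) (θ (u - z))) s‖))
        ≤ ENNReal.ofReal (Real.sqrt (W.w z) * v z) *
            ∑ k ∈ Finset.Icc 1 (n + 1),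
              ∫⁻ s : ℝ, ENNReal.ofReal (W.w (-s) ^ n *
                ‖iteratedDeriv k (fun u : ℝ => θ u * (starRingEnd ℂ) (θ (u - z))) s‖) := by
          refine mul_le_mul_right (Finset.sup_le fun k hk => ?_) _
          exact Finset.single_le_sum
            (f := fun k => ∫⁻ s : ℝ, ENNReal.ofReal (W.w (-s) ^ n *
              ‖iteratedDeriv k (fun u : ℝ => θ u * (starRingEnd ℂ) (θ (u - z))) s‖))
            (fun _ _ => zero_le) hk
      _ = ∑ k ∈ Finset.Icc 1 (n + 1), ENNReal.ofReal (Real.sqrt (W.w z) * v z) *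
            ∫⁻ s : ℝ, ENNReal.ofReal (W.w (-s) ^ n *
              ‖iteratedDeriv k (fun u : ℝ => θ u * (starRingEnd ℂ) (θ (u - z))) s‖) :=
          Finset.mul_sum _ _ _
      _ ≤ ∑ k ∈ Finset.Icc 1 (n + 1), ∫⁻ s : ℝ,
            ENNReal.ofReal (Real.sqrt (W.w z) * v z) *
              ENNReal.ofReal (W.w (-s) ^ n *
                ‖iteratedDeriv k (fun u : ℝ => θ u * (starRingEnd ℂ) (θ (u - z))) s‖) :=
          Finset.sum_le_sum fun k hk => lintegral_const_mul_le _ _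
      _ ≤ ∑ k ∈ Finset.Icc 1 (n + 1), ∫⁻ s : ℝ,
            ∑ j ∈ Finset.range (k + 1),
              (ENNReal.ofReal (Real.sqrt C) * (k.choose j : ℝ≥0∞)) *
              (ENNReal.ofReal ((v s * W.w (-s) ^ n * Real.sqrt (W.w s)) *
                  ‖iteratedDeriv j θ s‖) *
               ENNReal.ofReal ((v (s - z) * Real.sqrt (W.w (-(s - z)))) *
                  ‖iteratedDeriv (k - j) θ (s - z)‖)) :=
          Finset.sum_le_sum fun k hk => lintegral_mono fun s => hptwise k hk s
      _ ≤ ∫⁻ s : ℝ, ∑ k ∈ Finset.Icc 1 (n + 1),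
            ∑ j ∈ Finset.range (k + 1),
              (ENNReal.ofReal (Real.sqrt C) * (k.choose j : ℝ≥0∞)) *
              (ENNReal.ofReal ((v s * W.w (-s) ^ n * Real.sqrt (W.w s)) *
                  ‖iteratedDeriv j θ s‖) *
               ENNReal.ofReal ((v (s - z) * Real.sqrt (W.w (-(s - z)))) *
                  ‖iteratedDeriv (k - j) θ (s - z)‖)) :=
          aux_sum_le_lintegral _ _
      _ = ∫⁻ s : ℝ, ∑ i ∈ T,
            (ENNReal.ofReal (Real.sqrt C) * (i.1.choose i.2 : ℝ≥0∞)) *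
            (ENNReal.ofReal ((v s * W.w (-s) ^ n * Real.sqrt (W.w s)) *
                ‖iteratedDeriv i.2 θ s‖) *
             ENNReal.ofReal ((v (s - z) * Real.sqrt (W.w (-(s - z)))) *
                ‖iteratedDeriv (i.1 - i.2) θ (s - z)‖)) := by
          refine lintegral_congr fun s => ?_
          rw [hT, Finset.sum_sigma']
  refine lt_of_le_of_lt (lintegral_mono step1) ?_
  exact aux_double T
    (fun i s => ENNReal.ofReal ((v s * W.w (-s) ^ n * Real.sqrt (W.w s)) *
      ‖iteratedDeriv i.2 θ s‖))
    (fun i s => ENNReal.ofReal ((v s * Real.sqrt (W.w (-s))) *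
      ‖iteratedDeriv (i.1 - i.2) θ s‖))
    (fun i => ENNReal.ofReal (Real.sqrt C) * (i.1.choose i.2 : ℝ≥0∞))
    (fun i hi => (hA i.2 (hmemT i hi).1).2)
    (fun i hi => (hB (i.1 - i.2) (hmemT i hi).2).2)
    (fun i hi => (hA i.2 (hmemT i hi).1).1)
    (fun i hi => (hB (i.1 - i.2) (hmemT i hi).2).1)
    (fun i hi => ENNReal.mul_lt_top ENNReal.ofReal_lt_top (ENNReal.natCast_lt_top _))
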